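/- The rational function F(x,y) = 1/((1−3x)(1−y−3x+3x^2)) has diagonal Taylor coefficients c_{n,n} = 9^n, where F(x,y) = ∑_{m,n≥0} c_{m,n} x^m y^n. -/

import Mathlib

namespace GesselAux
open PowerSeries
noncomputable section

def A : ℚ⟦X⟧ := 1 - 3 * X + 3 * X ^ 2
def U : ℚ⟦X⟧ := 1 - 3 * X

lemma constA : constantCoeff A ≠ 0 := by
  have : constantCoeff A = 1 := by simp [A]
  rw [this]; exact one_ne_zero

lemma constU : constantCoeff U ≠ 0 := by
  have : constantCoeff U = 1 := by simp [U]
  rw [this]; exact one_ne_zero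

lemma hAA : A * A⁻¹ = 1 := PowerSeries.mul_inv_cancel _ constA
lemma hUU : U * U⁻¹ = 1 := PowerSeries.mul_inv_cancel _ constU

lemma dA : d⁄dX ℚ A = -3 + 6 * X := by
  have h3 : (3:ℚ⟦X⟧) = C 3 := by rw [map_ofNat]
  simp [A, h3, Derivation.leibniz, Derivation.leibniz_pow]
  rw [← h3]; ring

lemma hU2 : U^2 = A + X * (d⁄dX ℚ A) := by rw [dA]; unfold U A; ring

lemma Wzero (s : ℕ) : coeff (s+1) (U^2 * (A⁻¹)^(s+2)) = 0 := by
  have hsplit : U^2 * (A⁻¹)^(s+2)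
      = (A⁻¹)^(s+1) + X * ((d⁄dX ℚ A) * (A⁻¹)^(s+2)) := by
    rw [hU2]; linear_combination ((A⁻¹)^(s+1)) * hAA
  have hder : d⁄dX ℚ ((A⁻¹)^(s+1))
      = -(C ((s:ℚ)+1) * ((d⁄dX ℚ A) * (A⁻¹)^(s+2))) := by
    rw [Derivation.leibniz_pow, PowerSeries.derivative_inv']
    simp only [smul_eq_mul, nsmul_eq_mul, Nat.cast_add, Nat.cast_one, Nat.add_sub_cancel,
      map_add, map_natCast, map_one]
    ring
  have hs1 : ((s:ℚ)+1) ≠ 0 := by positivity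
  have hc : ((s:ℚ)+1) * coeff s ((d⁄dX ℚ A) * (A⁻¹)^(s+2))
      = ((s:ℚ)+1) * (-(coeff (s+1) ((A⁻¹)^(s+1)))) := by
    have h1 := congrArg (coeff s) hder
    rw [PowerSeries.coeff_derivative, map_neg, PowerSeries.coeff_C_mul] at h1
    linarith [h1]
  have hc' := mul_left_cancel₀ hs1 hc
  rw [hsplit, map_add, PowerSeries.coeff_succ_X_mul, hc']
  ring

lemma hu3 : U^3 = 1 - 9 * X * A := by unfold U A; ring

lemma key : ∀ n : ℕ, coeff n (U⁻¹ * (A⁻¹)^(n+1)) = 9^n := by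
  intro n
  induction n with
  | zero =>
      rw [pow_zero, pow_one, coeff_zero_eq_constantCoeff, map_mul,
        PowerSeries.constantCoeff_inv, PowerSeries.constantCoeff_inv]
      have h1 : constantCoeff A = 1 := by simp [A]
      have h2 : constantCoeff U = 1 := by simp [U]
      rw [h1, h2]
      norm_num
  | succ n ih =>
      have hid : U⁻¹ * (A⁻¹)^(n+2)
          = C 9 * (X * (U⁻¹ * (A⁻¹)^(n+1))) + U^2 * (A⁻¹)^(n+2) := by
        have h9 : (C 9 : ℚ⟦X⟧) = 9 := by rw [map_ofNat]
        rw [h9]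
        linear_combination (-(U⁻¹*(A⁻¹)^(n+2))) * hu3 + (9*X*U⁻¹*(A⁻¹)^(n+1)) * hAA
          + (U^2*(A⁻¹)^(n+2)) * hUU
      rw [hid, map_add, PowerSeries.coeff_C_mul, PowerSeries.coeff_succ_X_mul, ih, Wzero]
      ring

def d2 (m n : ℕ) : Fin 2 →₀ ℕ := Finsupp.single 0 m + Finsupp.single 1 n

def Φ (n : ℕ) (G : MvPowerSeries (Fin 2) ℚ) : ℚ⟦X⟧ :=
  PowerSeries.mk fun m => MvPowerSeries.coeff (R := ℚ) (d2 m n) G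

lemma coeff_Φ (m n : ℕ) (G : MvPowerSeries (Fin 2) ℚ) :
    coeff m (Φ n G) = MvPowerSeries.coeff (R := ℚ) (d2 m n) G := coeff_mk _ _

lemma d2_apply0 (m n : ℕ) : d2 m n 0 = m := by
  simp [d2, Finsupp.single_apply]

lemma d2_apply1 (m n : ℕ) : d2 m n 1 = n := by
  simp [d2, Finsupp.single_apply]

lemma Φ_add (n : ℕ) (G H : MvPowerSeries (Fin 2) ℚ) : Φ n (G + H) = Φ n G + Φ n H := by
  ext m; simp [coeff_Φ]

lemma Φ_sub (n : ℕ) (G H : MvPowerSeries (Fin 2) ℚ) : Φ n (G - H) = Φ n G - Φ n H := by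
  ext m; simp [coeff_Φ]

lemma Φ_smul (n : ℕ) (q : ℚ) (G : MvPowerSeries (Fin 2) ℚ) : Φ n (q • G) = q • Φ n G := by
  ext m; simp [coeff_Φ, MvPowerSeries.coeff_smul, PowerSeries.coeff_smul]

lemma Φ_one_zero : Φ 0 (1 : MvPowerSeries (Fin 2) ℚ) = 1 := by
  ext m
  rw [coeff_Φ, MvPowerSeries.coeff_one, PowerSeries.coeff_one]
  by_cases hm : m = 0
  · subst hm; simp [d2]
  · rw [if_neg hm, if_neg]
    intro h
    apply hm
    have := congrArg (fun f => f (0 : Fin 2)) h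
    simpa [d2_apply0] using this

lemma Φ_one_succ (n : ℕ) : Φ (n+1) (1 : MvPowerSeries (Fin 2) ℚ) = 0 := by
  ext m
  rw [coeff_Φ, MvPowerSeries.coeff_one, if_neg]
  · simp
  · intro h
    have := congrArg (fun f => f (1 : Fin 2)) h
    simp [d2_apply1] at this

lemma le_X0 (m n : ℕ) : Finsupp.single (0 : Fin 2) 1 ≤ d2 (m+1) n := by
  rw [Finsupp.le_def]
  rw [Fin.forall_fin_two]
  constructor
  · simp [d2_apply0, Finsupp.single_apply]
  · simp [d2_apply1, Finsupp.single_apply]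

lemma sub_X0 (m n : ℕ) : d2 (m+1) n - Finsupp.single (0 : Fin 2) 1 = d2 m n := by
  ext i
  rw [Finsupp.tsub_apply]
  match i with
  | 0 => simp [d2_apply0, Finsupp.single_apply]
  | 1 => simp [d2_apply1, Finsupp.single_apply]

lemma Φ_mul_X0 (n : ℕ) (G : MvPowerSeries (Fin 2) ℚ) :
    Φ n (G * MvPowerSeries.X 0) = Φ n G * X := by
  ext m
  rw [coeff_Φ, MvPowerSeries.X, MvPowerSeries.coeff_mul_monomial]
  match m with
  | 0 =>
    rw [if_neg, ← pow_one (X : ℚ⟦X⟧), PowerSeries.coeff_mul_X_pow', if_neg (by norm_num)]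
    intro h
    have := (Finsupp.le_def.mp h) 0
    simp [d2_apply0] at this
  | m+1 =>
    rw [if_pos (le_X0 m n), sub_X0, PowerSeries.coeff_succ_mul_X, coeff_Φ, mul_one]

lemma Φ_mul_X1_succ (n : ℕ) (G : MvPowerSeries (Fin 2) ℚ) :
    Φ (n+1) (G * MvPowerSeries.X 1) = Φ n G := by
  ext m
  have hsub : d2 m (n+1) - Finsupp.single (1 : Fin 2) 1 = d2 m n := by
    ext i
    rw [Finsupp.tsub_apply]
    match i with
    | 0 => simp [d2_apply0, Finsupp.single_apply]
    | 1 => simp [d2_apply1, Finsupp.single_apply]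
  have hle : Finsupp.single (1 : Fin 2) 1 ≤ d2 m (n+1) := by
    rw [Finsupp.le_def, Fin.forall_fin_two]
    constructor
    · simp [d2_apply0, Finsupp.single_apply]
    · simp [d2_apply1, Finsupp.single_apply]
  rw [coeff_Φ, MvPowerSeries.X, MvPowerSeries.coeff_mul_monomial, if_pos hle, hsub, coeff_Φ,
    mul_one]

lemma Φ_mul_X1_zero (G : MvPowerSeries (Fin 2) ℚ) :
    Φ 0 (G * MvPowerSeries.X 1) = 0 := by
  ext m
  rw [coeff_Φ, MvPowerSeries.X, MvPowerSeries.coeff_mul_monomial, if_neg]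
  · simp
  · intro h
    have := (Finsupp.le_def.mp h) 1
    simp [d2_apply1] at this

theorem gessel_main (F : MvPowerSeries (Fin 2) ℚ)
    (hF : F * ((1 - 3 * MvPowerSeries.X 0) * (1 - MvPowerSeries.X 1 - 3 * MvPowerSeries.X 0
      + 3 * (MvPowerSeries.X 0) ^ 2)) = 1) :
    ∀ n : ℕ, MvPowerSeries.coeff (R := ℚ) (Finsupp.single 0 n + Finsupp.single 1 n) F = 9 ^ n := by
  have hW : F * (1 - 6 * MvPowerSeries.X 0 + 12 * (MvPowerSeries.X 0)^2
        - 9 * (MvPowerSeries.X 0)^3)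
      = 1 + (F * (1 - 3 * MvPowerSeries.X 0)) * MvPowerSeries.X 1 := by
    linear_combination hF
  have hL : ∀ (k : ℕ) (G : MvPowerSeries (Fin 2) ℚ),
      Φ k (G * (1 - 6 * MvPowerSeries.X 0 + 12 * (MvPowerSeries.X 0)^2
        - 9 * (MvPowerSeries.X 0)^3)) = Φ k G * (U * A) := by
    intro k G
    have e1 : G * (1 - 6 * MvPowerSeries.X 0 + 12 * (MvPowerSeries.X 0)^2
          - 9 * (MvPowerSeries.X 0)^3)
        = G - (6:ℚ) • (G * MvPowerSeries.X 0)
          + (12:ℚ) • ((G * MvPowerSeries.X 0) * MvPowerSeries.X 0)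
          - (9:ℚ) • (((G * MvPowerSeries.X 0) * MvPowerSeries.X 0) * MvPowerSeries.X 0) := by
      simp only [Algebra.smul_def, map_ofNat]
      ring
    rw [e1, Φ_sub, Φ_add, Φ_sub, Φ_smul, Φ_smul, Φ_smul]
    simp only [Φ_mul_X0]
    simp only [Algebra.smul_def, map_ofNat]
    unfold U A
    ring
  have hV : ∀ (k : ℕ) (G : MvPowerSeries (Fin 2) ℚ),
      Φ k (G * (1 - 3 * MvPowerSeries.X 0)) = Φ k G * U := by
    intro k G
    have e1 : G * (1 - 3 * MvPowerSeries.X 0) = G - (3:ℚ) • (G * MvPowerSeries.X 0) := by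
      simp only [Algebra.smul_def, map_ofNat]
      ring
    rw [e1, Φ_sub, Φ_smul, Φ_mul_X0]
    simp only [Algebra.smul_def, map_ofNat]
    unfold U
    ring
  have E0 : Φ 0 F * (U * A) = 1 := by
    have h := congrArg (Φ 0) hW
    rw [hL, Φ_add, Φ_one_zero, Φ_mul_X1_zero] at h
    simpa using h
  have En : ∀ n : ℕ, Φ (n+1) F * (U * A) = Φ n F * U := by
    intro n
    have h := congrArg (Φ (n+1)) hW
    rw [hL, Φ_add, Φ_one_succ, Φ_mul_X1_succ, hV] at h
    simpa using h
  have h1 : (U*A)*(U⁻¹*A⁻¹) = 1 := by linear_combination (U*U⁻¹)*hAA + hUU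
  have hform : ∀ n : ℕ, Φ n F = U⁻¹ * (A⁻¹)^(n+1) := by
    intro n
    induction n with
    | zero => linear_combination (U⁻¹*A⁻¹)*E0 - (Φ 0 F)*h1
    | succ n ih =>
        linear_combination (U⁻¹*A⁻¹)*(En n) - (Φ (n+1) F)*h1 + (Φ n F*A⁻¹)*hUU + A⁻¹*ih
  intro n
  have hc := coeff_Φ n n F
  rw [show (Finsupp.single (0:Fin 2) n + Finsupp.single 1 n) = d2 n n from rfl, ← hc, hform, key]

end
end GesselAux

open MvPowerSeries

/-- Gessel's Monthly problem #11757: the diagonal Taylor coefficients of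
`F(x,y) = 1/((1−3x)(1−y−3x+3x²))` are `9^n`. -/
theorem gessel_diagonal (F : MvPowerSeries (Fin 2) ℚ)
    (hF : F * ((1 - 3 * X 0) * (1 - X 1 - 3 * X 0 + 3 * (X 0) ^ 2)) = 1) :
    ∀ n : ℕ, MvPowerSeries.coeff (R := ℚ) (Finsupp.single 0 n + Finsupp.single 1 n) F = 9 ^ n :=
  GesselAux.gessel_main F hF
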